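/- Let d ≥ 2, let K be a number field, and let S be the set of primes of K dividing (2d−2)!, together with all archimedean places. For a ∈ K̄^×, let f_a(x) = a·x(x−1)(x−2)⋯(x−d+1) / ((x+1)(x+2)⋯(x+d−1)), a degree-d rational map, and let X = {0,1,2,…,d−1} ∪ {−1,−2,…,−(d−1)} ∪ {∞} ⊂ P^1, a set of 2d points. Then for all a ∈ R_S^×, the triple (f_a, X, X) lies in GR_d^1[2d](K,S); in particular f_a has simple good reduction outside S, f_a(X) = {0,∞} ⊂ X, X has good reduction outside S, and ∑_{P∈X} e_{f_a}(P) = 2d (so every point of X is unramified for f_a). -/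

import Mathlib

open Polynomial
open scoped Classical

noncomputable section

/-- The projective line over `L`: `L` together with a point at infinity (`none`). -/
abbrev ProjLine (L : Type*) := Option L

namespace ProjLine

variable {L : Type*} [Field L]

/-- Value of the rational map `p/q` at a finite point `x`. -/
def evalAt (p q : L[X]) (x : L) : ProjLine L :=
  if q.eval x = 0 then none else some (p.eval x / q.eval x)

/-- Value at a point of the projective line of the degree-`d` morphism whose
dehomogenized description is the pair `(p, q)` (i.e. the morphism
`[Y^d·p(X/Y) : Y^d·q(X/Y)]` in homogeneous coordinates). -/
def eval (d : ℕ) (p q : L[X]) : ProjLine L → ProjLine L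
  | some x => evalAt p q x
  | none => evalAt (p.reflect d) (q.reflect d) 0

/-- Ramification index of `p/q` at a finite point `x`. -/
def ramAt (p q : L[X]) (x : L) : ℕ :=
  if q.eval x = 0 then rootMultiplicity x q
  else rootMultiplicity x (C (q.eval x) * p - C (p.eval x) * q)

/-- Ramification index at a point of the projective line of the degree-`d` morphism
with dehomogenized description `(p, q)`. -/
def ram (d : ℕ) (p q : L[X]) : ProjLine L → ℕ
  | some x => ramAt p q x
  | none => ramAt (p.reflect d) (q.reflect d) 0

/-- The Möbius transformation of the projective line attached to a 2×2 matrix. -/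
def mobius (M : Matrix (Fin 2) (Fin 2) L) : ProjLine L → ProjLine L
  | some x => if M 1 0 * x + M 1 1 = 0 then none
      else some ((M 0 0 * x + M 0 1) / (M 1 0 * x + M 1 1))
  | none => if M 1 0 = 0 then none else some (M 0 0 / M 1 0)

/-- The Sylvester matrix of the binary forms of degrees `d` and `e` whose
dehomogenizations are `p` and `q`. -/
def sylvester (d e : ℕ) (p q : L[X]) : Matrix (Fin (e + d)) (Fin (e + d)) L :=
  Matrix.of fun i j =>
    if (i : ℕ) < e then
      (if (i : ℕ) ≤ (j : ℕ) ∧ (j : ℕ) ≤ (i : ℕ) + d then p.coeff (d + (i : ℕ) - (j : ℕ)) else 0)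
    else
      (if (i : ℕ) - e ≤ (j : ℕ) ∧ (j : ℕ) ≤ ((i : ℕ) - e) + e then
        q.coeff (e + ((i : ℕ) - e) - (j : ℕ)) else 0)

/-- The resultant of the binary forms of degrees `d` and `e` whose dehomogenizations
are `p` and `q`, as a Sylvester determinant. -/
def resultant (d e : ℕ) (p q : L[X]) : L := (sylvester d e p q).det

/-- Reduction of a point of the projective line over `L` modulo (the maximal ideal of)
a valuation subring `O` of `L`. -/
def red (O : ValuationSubring L) : ProjLine L → ProjLine (IsLocalRing.ResidueField ↥O)
  | some x => if h : x ∈ O then some (IsLocalRing.residue ↥O ⟨x, h⟩) else none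
  | none => none

end ProjLine

/-- A pair of polynomials `(p, q)` over a field is the (dehomogenized) description of a
morphism `P¹ → P¹` of degree `d`:  `p` and `q` are coprime, have degree at most `d`,
and at least one of them has degree exactly `d`. -/
def IsRatMapOfDeg {F : Type*} [Field F] (d : ℕ) (p q : F[X]) : Prop :=
  IsCoprime p q ∧ p.natDegree ≤ d ∧ q.natDegree ≤ d ∧ (p.natDegree = d ∨ q.natDegree = d)

open IsDedekindDomain NumberField

/-- The finite places of a number field `K`, i.e. the nonzero primes of its ring of
integers.  (Archimedean places impose no good-reduction conditions, so a finite set `S`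
of places containing all archimedean ones is modelled by its finite set of
nonarchimedean members.) -/
abbrev NFPlace (K : Type*) [Field K] [NumberField K] := HeightOneSpectrum (𝓞 K)

variable {K : Type*} [Field K] [NumberField K]

/-- `x ∈ R_S`: `x` is integral at every place outside `S`. -/
def SInteger (S : Set (NFPlace K)) (x : K) : Prop :=
  ∀ v : NFPlace K, v ∉ S → v.valuation K x ≤ 1

/-- `x ∈ R_S^×`: `x` is a unit at every place outside `S`. -/
def SUnit (S : Set (NFPlace K)) (x : K) : Prop :=
  x ≠ 0 ∧ ∀ v : NFPlace K, v ∉ S → v.valuation K x = 1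

section Ext

variable {Kb : Type*} [Field Kb] [Algebra K Kb]

/-- A valuation subring `O` of an extension `Kb` of `K` lies over the place `v` of `K`
if its restriction to `K` is exactly the valuation ring of `v`. -/
def LiesOver (O : ValuationSubring Kb) (v : NFPlace K) : Prop :=
  ∀ x : K, algebraMap K Kb x ∈ O ↔ v.valuation K x ≤ 1

/-- A set `X` of points of the projective line over an extension of `K` has good
reduction outside `S` if for every place `v ∉ S` and every extension of `v`
(i.e. every valuation subring lying over `v`), reduction is injective on `X`. -/
def GoodRedPoints (S : Set (NFPlace K)) (X : Set (ProjLine Kb)) : Prop :=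
  ∀ v : NFPlace K, v ∉ S → ∀ O : ValuationSubring Kb, LiesOver O v →
    Set.InjOn (ProjLine.red O) X

/-- `X` is stable under the action of `Gal(Kb/K)`. -/
def GalInvariant (X : Set (ProjLine Kb)) : Prop :=
  ∀ σ : Kb ≃ₐ[K] Kb, ∀ P ∈ X, Option.map (⇑σ) P ∈ X

end Ext

variable (K) in
/-- A triple `(f, Y, X)` consisting of (the dehomogenized description of) a rational
map and two sets of points of `P¹(K̄)`. -/
structure DynTriple where
  p : K[X]
  q : K[X]
  Y : Set (ProjLine (AlgebraicClosure K))
  X : Set (ProjLine (AlgebraicClosure K))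

/-- Base change of a polynomial over `K` to the algebraic closure. -/
def polyBar (p : K[X]) : (AlgebraicClosure K)[X] := p.map (algebraMap K (AlgebraicClosure K))

/-- Base change of a matrix over `K` to the algebraic closure. -/
def matBar (M : Matrix (Fin 2) (Fin 2) K) : Matrix (Fin 2) (Fin 2) (AlgebraicClosure K) :=
  M.map (algebraMap K (AlgebraicClosure K))

/-- `f` (given by the pair `(p,q)` of degree `d`) has simple good reduction outside `S`:
some `PGL₂(K)`-conjugate of `f` is given by a pair of `S`-integral polynomials whose
resultant is an `S`-unit. -/
def SimpleGoodRed (S : Set (NFPlace K)) (d : ℕ) (p q : K[X]) : Prop :=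
  ∃ (M : Matrix (Fin 2) (Fin 2) K) (p' q' : K[X]),
    M.det ≠ 0 ∧
    IsRatMapOfDeg d p' q' ∧
    (∀ n, SInteger S (p'.coeff n)) ∧ (∀ n, SInteger S (q'.coeff n)) ∧
    SUnit S (ProjLine.resultant d d p' q') ∧
    ∀ P : ProjLine K,
      ProjLine.mobius M (ProjLine.eval d p' q' P)
        = ProjLine.eval d p q (ProjLine.mobius M P)

/-- Membership in `𝐺𝑅̃¹_d[n](K,S)`:  `(f, Y, X)` with `f` of degree `d`, `X = Y ∪ f(Y)`
finite and Galois invariant, total ramification weight `n` on `Y`, and `X` of good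
reduction outside `S`.  (No good-reduction requirement on `f` itself.) -/
def MemGRtilde (S : Set (NFPlace K)) (d n : ℕ) (t : DynTriple K) : Prop :=
  IsRatMapOfDeg d t.p t.q ∧
  t.Y.Finite ∧
  t.X = t.Y ∪ (ProjLine.eval d (polyBar t.p) (polyBar t.q) '' t.Y) ∧
  GalInvariant (K := K) t.X ∧
  (∑ᶠ P ∈ t.Y, ProjLine.ram d (polyBar t.p) (polyBar t.q) P) = n ∧
  GoodRedPoints S t.X

/-- Membership in `𝐺𝑅¹_d[n](K,S)`: as in `MemGRtilde`, and in addition `f` has simple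
good reduction outside `S`. -/
def MemGR (S : Set (NFPlace K)) (d n : ℕ) (t : DynTriple K) : Prop :=
  MemGRtilde S d n t ∧ SimpleGoodRed S d t.p t.q

/-- Two triples are `PGL₂(R_S)`-equivalent:  `t' = φ⁻¹ ∘ t ∘ φ` for some `φ = M` with
`S`-integral entries and `S`-unit determinant. -/
def TripleEquiv (S : Set (NFPlace K)) (d : ℕ) (t t' : DynTriple K) : Prop :=
  ∃ M : Matrix (Fin 2) (Fin 2) K,
    (∀ i j, SInteger S (M i j)) ∧ SUnit S M.det ∧
    (∀ P, ProjLine.mobius (matBar M) (ProjLine.eval d (polyBar t'.p) (polyBar t'.q) P)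
        = ProjLine.eval d (polyBar t.p) (polyBar t.q) (ProjLine.mobius (matBar M) P)) ∧
    ProjLine.mobius (matBar M) '' t'.Y = t.Y ∧
    ProjLine.mobius (matBar M) '' t'.X = t.X

end

noncomputable section
open Polynomial

/-- Numerator `a·x(x-1)(x-2)⋯(x-d+1)` of the map `f_a` of Proposition 4.1. -/
def fNum (L : Type*) [Field L] (d : ℕ) (a : L) : L[X] :=
  C a * ∏ i ∈ Finset.range d, (X - C ((i : ℕ) : L))

/-- Denominator `(x+1)(x+2)⋯(x+d-1)` of the map `f_a` of Proposition 4.1. -/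
def fDen (L : Type*) [Field L] (d : ℕ) : L[X] :=
  ∏ i ∈ Finset.range (d - 1), (X + C ((i + 1 : ℕ) : L))

/-- The set `X = {0, ±1, ±2, …, ±(d-1)} ∪ {∞}` of `2d` points of Proposition 4.1. -/
def stdSet (L : Type*) [Field L] (d : ℕ) : Set (ProjLine L) :=
  insert (none : ProjLine L)
    ((fun m : ℤ => (some ((m : ℤ) : L) : ProjLine L)) '' Set.Icc (-(d : ℤ) + 1) ((d : ℤ) - 1))

end

noncomputable section
open Polynomial IsDedekindDomain NumberField

section Aux
set_option linter.unusedSectionVars false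
set_option linter.unusedVariables false

variable {L : Type*} [Field L] [CharZero L] {d : ℕ} {a : L}

lemma fDen_eq (d : ℕ) : fDen L d = ∏ i ∈ Finset.range (d-1), (X - C (-((i+1 : ℕ) : L))) := by
  unfold fDen
  exact Finset.prod_congr rfl fun i _ => by rw [map_neg, sub_neg_eq_add]

lemma prodNum_natDegree : (∏ i ∈ Finset.range d, (X - C ((i:ℕ) : L))).natDegree = d := by
  rw [natDegree_prod _ _ (fun i _ => X_sub_C_ne_zero _)]
  simp only [natDegree_X_sub_C]
  simp

lemma fDen_monic : (fDen L d).Monic :=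
  monic_prod_of_monic _ _ (fun i _ => monic_X_add_C _)

lemma fDen_natDegree : (fDen L d).natDegree = d - 1 := by
  rw [fDen, natDegree_prod _ _ (fun i _ => (monic_X_add_C _).ne_zero)]
  simp only [natDegree_X_add_C]
  simp

lemma fNum_natDegree (ha : a ≠ 0) : (fNum L d a).natDegree = d := by
  rw [fNum, natDegree_C_mul ha, prodNum_natDegree]

lemma fNum_ne_zero (ha : a ≠ 0) : fNum L d a ≠ 0 := by
  apply mul_ne_zero (by simpa using ha)
  exact Finset.prod_ne_zero_iff.2 fun i _ => X_sub_C_ne_zero _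

lemma fDen_ne_zero : fDen L d ≠ 0 := fDen_monic.ne_zero

lemma fNum_coeff_d (ha : a ≠ 0) : (fNum L d a).coeff d = a := by
  have h1 : (∏ i ∈ Finset.range d, (X - C ((i:ℕ) : L))).Monic :=
    monic_prod_of_monic _ _ (fun i _ => monic_X_sub_C _)
  have h2 := h1.coeff_natDegree
  rw [prodNum_natDegree] at h2
  rw [fNum, coeff_C_mul, h2, mul_one]

lemma fDen_coeff_d (hd : 1 ≤ d) : (fDen L d).coeff d = 0 :=
  coeff_eq_zero_of_natDegree_lt (by rw [fDen_natDegree]; omega)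

lemma fNum_eval (x : L) : (fNum L d a).eval x = a * ∏ i ∈ Finset.range d, (x - (i:ℕ)) := by
  simp [fNum, eval_prod]

lemma fDen_eval (x : L) : (fDen L d).eval x = ∏ i ∈ Finset.range (d-1), (x + ((i+1:ℕ) : L)) := by
  simp [fDen, eval_prod]

lemma fNum_eval_int (m : ℤ) (h0 : 0 ≤ m) (hm : m < d) : (fNum L d a).eval ((m : ℤ) : L) = 0 := by
  rw [fNum_eval]
  apply mul_eq_zero_of_right
  have hmem : m.toNat ∈ Finset.range d := Finset.mem_range.2 (by omega)
  apply Finset.prod_eq_zero hmem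
  have : ((m.toNat : ℕ) : L) = ((m : ℤ) : L) := by
    rw [← Int.cast_natCast, Int.toNat_of_nonneg h0]
  rw [this, sub_self]

lemma fDen_eval_int_pos_ne (m : ℤ) (h0 : 0 ≤ m) : (fDen L d).eval ((m:ℤ) : L) ≠ 0 := by
  rw [fDen_eval]
  apply Finset.prod_ne_zero_iff.2
  intro i _
  intro h
  have h' : ((m + i + 1 : ℤ) : L) = 0 := by push_cast at h ⊢; linear_combination h
  have : (m + i + 1 : ℤ) = 0 := by exact_mod_cast h'
  omega

lemma fDen_eval_int_neg (m : ℤ) (h1 : m ≤ -1) (h2 : -(d:ℤ) + 1 ≤ m) :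
    (fDen L d).eval ((m:ℤ) : L) = 0 := by
  rw [fDen_eval]
  have hmem : (-m).toNat - 1 ∈ Finset.range (d-1) := Finset.mem_range.2 (by omega)
  apply Finset.prod_eq_zero hmem
  have h3 : ((-m).toNat - 1) + 1 = (-m).toNat := by omega
  have : ((((-m).toNat - 1) + 1 : ℕ) : L) = ((-m : ℤ) : L) := by
    rw [h3, ← Int.cast_natCast, Int.toNat_of_nonneg (by omega : (0:ℤ) ≤ -m)]
  rw [this]; push_cast; ring

lemma roots_prodNum : (∏ i ∈ Finset.range d, (X - C ((i:ℕ) : L))).roots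
    = (Finset.range d).val.map (fun i : ℕ => (i:L)) := by
  have h : (∏ i ∈ Finset.range d, (X - C ((i:ℕ):L))) =
      (Multiset.map (fun c : L => X - C c) ((Finset.range d).val.map (fun i : ℕ => (i:L)))).prod := by
    rw [Multiset.map_map]
    exact Finset.prod_eq_multiset_prod _ _
  rw [h, roots_multiset_prod_X_sub_C]

lemma rootMultiplicity_prodNum (m : ℤ) (h0 : 0 ≤ m) (hm : m < d) :
    rootMultiplicity ((m:ℤ) : L) (∏ i ∈ Finset.range d, (X - C ((i:ℕ) : L))) = 1 := by
  classical
  rw [← count_roots, roots_prodNum]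
  have he : ((m:ℤ) : L) = ((m.toNat : ℕ) : L) := by
    rw [← Int.cast_natCast, Int.toNat_of_nonneg h0]
  rw [he, Multiset.count_map_eq_count' _ _ Nat.cast_injective]
  have hmem : m.toNat ∈ Finset.range d := Finset.mem_range.2 (by omega)
  exact Multiset.count_eq_one_of_mem (Finset.range d).nodup hmem

lemma rootMultiplicity_fNum (m : ℤ) (ha : a ≠ 0) (h0 : 0 ≤ m) (hm : m < d) :
    rootMultiplicity ((m:ℤ) : L) (fNum L d a) = 1 := by
  rw [← count_roots, fNum, roots_C_mul _ ha, count_roots]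
  exact rootMultiplicity_prodNum m h0 hm

lemma roots_fDen : (fDen L d).roots
    = (Finset.range (d-1)).val.map (fun i : ℕ => -((i+1 : ℕ):L)) := by
  have h : fDen L d =
      (Multiset.map (fun c : L => X - C c)
        ((Finset.range (d-1)).val.map (fun i : ℕ => -((i+1:ℕ):L)))).prod := by
    rw [Multiset.map_map, fDen_eq]
    exact Finset.prod_eq_multiset_prod _ _
  rw [h, roots_multiset_prod_X_sub_C]

lemma rootMultiplicity_fDen (m : ℤ) (h1 : m ≤ -1) (h2 : -(d:ℤ) + 1 ≤ m) :
    rootMultiplicity ((m:ℤ) : L) (fDen L d) = 1 := by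
  classical
  rw [← count_roots, roots_fDen]
  have hinj : Function.Injective (fun i : ℕ => -((i+1:ℕ):L)) := by
    intro x y h
    simp only [neg_inj, Nat.cast_inj] at h
    omega
  have he : ((m:ℤ) : L) = (fun i : ℕ => -((i+1:ℕ):L)) ((-m).toNat - 1) := by
    show ((m:ℤ) : L) = -((((-m).toNat - 1) + 1 : ℕ):L)
    have h3 : ((-m).toNat - 1) + 1 = (-m).toNat := by omega
    rw [h3, ← Int.cast_natCast, Int.toNat_of_nonneg (by omega : (0:ℤ) ≤ -m)]
    push_cast; ring
  rw [he, Multiset.count_map_eq_count' _ _ hinj]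
  have hmem : (-m).toNat - 1 ∈ Finset.range (d-1) := Finset.mem_range.2 (by omega)
  exact Multiset.count_eq_one_of_mem (Finset.range (d-1)).nodup hmem


lemma isCoprime_fNum_fDen (ha : a ≠ 0) : IsCoprime (fNum L d a) (fDen L d) := by
  apply IsCoprime.mul_left
  · exact (isCoprime_zero_right.2 (isUnit_C.2 (isUnit_iff_ne_zero.2 ha))).of_isCoprime_of_dvd_right
      (dvd_zero _)
  · rw [fDen_eq]
    apply IsCoprime.prod_left
    intro i _
    apply IsCoprime.prod_right
    intro j _
    apply isCoprime_X_sub_C_of_isUnit_sub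
    apply isUnit_iff_ne_zero.2
    intro h
    have h' : ((i + j + 1 : ℕ) : L) = 0 := by push_cast at h ⊢; linear_combination h
    have : i + j + 1 = 0 := by exact_mod_cast h'
    omega

lemma evalAt_of_den_ne (p q : L[X]) (x : L) (hq : q.eval x ≠ 0) :
    ProjLine.evalAt p q x = some (p.eval x / q.eval x) := if_neg hq

lemma eval_fa_nonneg (m : ℤ) (h0 : 0 ≤ m) (hm : m < d) :
    ProjLine.eval d (fNum L d a) (fDen L d) (some ((m:ℤ):L)) = some 0 := by
  show ProjLine.evalAt _ _ _ = _
  rw [evalAt_of_den_ne _ _ _ (fDen_eval_int_pos_ne m h0), fNum_eval_int m h0 hm, zero_div]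

lemma eval_fa_neg (m : ℤ) (h1 : m ≤ -1) (h2 : -(d:ℤ)+1 ≤ m) :
    ProjLine.eval d (fNum L d a) (fDen L d) (some ((m:ℤ):L)) = none := by
  show ProjLine.evalAt _ _ _ = _
  exact if_pos (fDen_eval_int_neg m h1 h2)

lemma reflect_fDen_eval0 (hd : 1 ≤ d) : ((fDen L d).reflect d).eval 0 = 0 := by
  rw [← coeff_zero_eq_eval_zero, coeff_reflect]
  simpa using fDen_coeff_d hd

lemma eval_fa_infty (hd : 1 ≤ d) :
    ProjLine.eval d (fNum L d a) (fDen L d) none = none := by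
  show ProjLine.evalAt _ _ _ = _
  exact if_pos (reflect_fDen_eval0 hd)

lemma ramAt_of_root (p q : L[X]) (x : L) (hq : q.eval x ≠ 0) (hp : p.eval x = 0) :
    ProjLine.ramAt p q x = rootMultiplicity x p := by
  unfold ProjLine.ramAt
  rw [if_neg hq, hp, map_zero, zero_mul, sub_zero, ← count_roots, roots_C_mul _ hq, count_roots]

lemma ram_fa_nonneg (ha : a ≠ 0) (m : ℤ) (h0 : 0 ≤ m) (hm : m < d) :
    ProjLine.ram d (fNum L d a) (fDen L d) (some ((m:ℤ):L)) = 1 := by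
  show ProjLine.ramAt _ _ _ = 1
  rw [ramAt_of_root _ _ _ (fDen_eval_int_pos_ne m h0) (fNum_eval_int m h0 hm)]
  exact rootMultiplicity_fNum m ha h0 hm

lemma ram_fa_neg (m : ℤ) (h1 : m ≤ -1) (h2 : -(d:ℤ)+1 ≤ m) :
    ProjLine.ram d (fNum L d a) (fDen L d) (some ((m:ℤ):L)) = 1 := by
  show ProjLine.ramAt _ _ _ = 1
  unfold ProjLine.ramAt
  rw [if_pos (fDen_eval_int_neg m h1 h2)]
  exact rootMultiplicity_fDen m h1 h2

lemma reflect_fDen (hd : 1 ≤ d) :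
    (fDen L d).reflect d = X * (fDen L d).reflect (d-1) := by
  have h := Polynomial.reflect_mul (f := (1 : L[X])) (g := fDen L d) (F := 1) (G := d - 1)
    (by simp) (le_of_eq fDen_natDegree)
  rw [one_mul] at h
  have h1 : 1 + (d - 1) = d := by omega
  rw [h1] at h
  rw [h]
  congr 1
  have : (1 : L[X]) = C 1 := by simp
  rw [this, Polynomial.reflect_C]
  simp

lemma ram_fa_infty (hd : 1 ≤ d) :
    ProjLine.ram d (fNum L d a) (fDen L d) none = 1 := by
  show ProjLine.ramAt _ _ _ = 1
  unfold ProjLine.ramAt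
  rw [if_pos (reflect_fDen_eval0 hd), reflect_fDen hd]
  have hr0 : ((fDen L d).reflect (d-1)).coeff 0 = 1 := by
    have h0 : ((fDen L d).reflect (d-1)).coeff 0 = (fDen L d).coeff (d-1) := by
      rw [coeff_reflect]; simp
    rw [h0, ← fDen_natDegree (L := L) (d := d)]
    exact fDen_monic.coeff_natDegree
  have hrne : (fDen L d).reflect (d-1) ≠ 0 := fun h => by simp [h] at hr0
  rw [Polynomial.rootMultiplicity_mul (mul_ne_zero X_ne_zero hrne)]
  have h1 : rootMultiplicity (0:L) X = 1 := by
    have : (X : L[X]) = X - C 0 := by simp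
    rw [this, rootMultiplicity_X_sub_C]; simp
  have h2 : rootMultiplicity (0:L) ((fDen L d).reflect (d-1)) = 0 := by
    apply rootMultiplicity_eq_zero
    intro hroot
    rw [Polynomial.IsRoot, ← coeff_zero_eq_eval_zero, hr0] at hroot
    exact one_ne_zero hroot
  rw [h1, h2]

lemma isRatMap_fa (hd : 2 ≤ d) (ha : a ≠ 0) : IsRatMapOfDeg d (fNum L d a) (fDen L d) :=
  ⟨isCoprime_fNum_fDen ha, le_of_eq (fNum_natDegree ha),
    by rw [fDen_natDegree]; omega, Or.inl (fNum_natDegree ha)⟩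

def stdFinset (L : Type*) [Field L] (d : ℕ) : Finset (ProjLine L) :=
  insert none ((Finset.Icc (-(d:ℤ)+1) ((d:ℤ)-1)).image (fun m : ℤ => (some ((m:ℤ):L) : ProjLine L)))

lemma stdSet_eq_coe : stdSet L d = ↑(stdFinset L d) := by
  unfold stdSet stdFinset
  rw [Finset.coe_insert, Finset.coe_image, Finset.coe_Icc]

lemma stdSet_finite : (stdSet L d).Finite := by
  rw [stdSet_eq_coe]; exact (stdFinset L d).finite_toSet

lemma none_notMem_image : (none : ProjLine L) ∉
    (Finset.Icc (-(d:ℤ)+1) ((d:ℤ)-1)).image (fun m : ℤ => (some ((m:ℤ):L) : ProjLine L)) := by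
  simp

lemma image_eval_stdSet (hd : 2 ≤ d) (ha : a ≠ 0) :
    ProjLine.eval d (fNum L d a) (fDen L d) '' stdSet L d
      = {some (0 : L), none} := by
  apply Set.Subset.antisymm
  · rintro P ⟨Q, hQ, rfl⟩
    rcases hQ with rfl | ⟨m, hm, rfl⟩
    · rw [eval_fa_infty (by omega)]; right; rfl
    · rw [Set.mem_Icc] at hm
      rcases le_or_gt 0 m with h0 | h0
      · rw [eval_fa_nonneg m h0 (by omega)]; left; rfl
      · rw [eval_fa_neg m (by omega) (by omega)]; right; rfl
  · rintro P (rfl | rfl)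
    · exact ⟨some ((0:ℤ):L), Or.inr ⟨0, Set.mem_Icc.2 ⟨by omega, by omega⟩, rfl⟩,
        eval_fa_nonneg 0 le_rfl (by omega)⟩
    · exact ⟨none, Or.inl rfl, eval_fa_infty (by omega)⟩

lemma image_eval_subset_stdSet (hd : 2 ≤ d) (ha : a ≠ 0) :
    ProjLine.eval d (fNum L d a) (fDen L d) '' stdSet L d ⊆ stdSet L d := by
  rw [image_eval_stdSet hd ha]
  rintro P (rfl | rfl)
  · refine Or.inr ⟨0, Set.mem_Icc.2 ⟨by omega, by omega⟩, ?_⟩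
    norm_num
  · exact Or.inl rfl

lemma sum_ram_stdSet (hd : 2 ≤ d) (ha : a ≠ 0) :
    (∑ᶠ P ∈ stdSet L d, ProjLine.ram d (fNum L d a) (fDen L d) P) = 2 * d := by
  classical
  rw [stdSet_eq_coe, finsum_mem_coe_finset]
  unfold stdFinset
  rw [Finset.sum_insert none_notMem_image]
  rw [Finset.sum_image (by
    intro x _ y _ h
    simp only [Option.some.injEq] at h
    exact_mod_cast h)]
  rw [ram_fa_infty (by omega)]
  have hcg : ∀ m ∈ Finset.Icc (-(d:ℤ)+1) ((d:ℤ)-1),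
      ProjLine.ram d (fNum L d a) (fDen L d) (some ((m:ℤ):L)) = 1 := by
    intro m hm
    rw [Finset.mem_Icc] at hm
    rcases le_or_gt 0 m with h0 | h0
    · exact ram_fa_nonneg ha m h0 (by omega)
    · exact ram_fa_neg m (by omega) (by omega)
  rw [Finset.sum_congr rfl hcg, Finset.sum_const, smul_eq_mul, mul_one, Int.card_Icc]
  omega

lemma galInvariant_stdSet {K : Type*} [Field K] [NumberField K] (d : ℕ) :
    GalInvariant (K := K) (stdSet (AlgebraicClosure K) d) := by
  intro σ P hP
  rcases hP with rfl | ⟨m, hm, rfl⟩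
  · exact Or.inl rfl
  · refine Or.inr ⟨m, hm, ?_⟩
    simp [Option.map_some, map_intCast]

lemma mobius_one {L : Type*} [Field L] (P : ProjLine L) :
    ProjLine.mobius (1 : Matrix (Fin 2) (Fin 2) L) P = P := by
  cases P with
  | none => simp [ProjLine.mobius, Matrix.one_apply]
  | some x => simp [ProjLine.mobius, Matrix.one_apply]

section NF
variable {K : Type*} [Field K] [NumberField K]

lemma val_int_le_one (v : NFPlace K) (k : ℤ) : v.valuation K ((k:ℤ) : K) ≤ 1 := by
  have h : ((k:ℤ) : K) = algebraMap (𝓞 K) K ((k:ℤ) : 𝓞 K) := by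
    rw [map_intCast]
  rw [h]
  exact v.valuation_le_one _

lemma val_nat_le_one (v : NFPlace K) (n : ℕ) : v.valuation K ((n:ℕ) : K) ≤ 1 := by
  have h : ((n:ℕ) : K) = (((n:ℤ)) : K) := by push_cast; rfl
  rw [h]; exact val_int_le_one v _

lemma val_int_eq_one {S : Set (NFPlace K)} {N : ℕ}
    (hfact : ∀ v : NFPlace K, v ∉ S → v.valuation K ((N.factorial : ℕ) : K) = 1)
    (v : NFPlace K) (hv : v ∉ S) (k : ℤ) (hk0 : k ≠ 0) (hk : k.natAbs ≤ N) :
    v.valuation K ((k : ℤ) : K) = 1 := by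
  have hdvd : (k.natAbs : ℕ) ∣ N.factorial := Nat.dvd_factorial (by omega) hk
  obtain ⟨m, hm⟩ := hdvd
  have hcast : ((N.factorial : ℕ) : K) = ((k.natAbs : ℕ) : K) * ((m : ℕ) : K) := by
    rw [hm]; push_cast; ring
  have h1 := hfact v hv
  rw [hcast, map_mul] at h1
  have hNat : v.valuation K ((k.natAbs : ℕ) : K) = 1 := by
    apply le_antisymm (val_nat_le_one v _)
    calc (1 : WithZero (Multiplicative ℤ))
        = v.valuation K ((k.natAbs : ℕ) : K) * v.valuation K ((m:ℕ) : K) := h1.symm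
      _ ≤ v.valuation K ((k.natAbs : ℕ) : K) * 1 := by
          exact mul_le_mul_right (val_nat_le_one v m) _
      _ = v.valuation K ((k.natAbs : ℕ) : K) := mul_one _
  rcases Int.natAbs_eq k with he | he
  · rw [he, Int.cast_natCast]; exact hNat
  · rw [he, Int.cast_neg, Valuation.map_neg, Int.cast_natCast]; exact hNat

lemma goodRedPoints_stdSet (d : ℕ) (hd : 2 ≤ d) (S : Set (NFPlace K))
    (hfact : ∀ v : NFPlace K, v ∉ S → v.valuation K (((2*d-2).factorial : ℕ) : K) = 1) :
    GoodRedPoints S (stdSet (AlgebraicClosure K) d) := by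
  intro v hv O hO
  have hmem : ∀ n : ℤ, ((n:ℤ) : AlgebraicClosure K) ∈ O := fun n => by
    have h := (hO ((n : ℤ) : K)).2 (val_int_le_one v n)
    rwa [map_intCast] at h
  have hres : ∀ k : ℤ, k ≠ 0 → k.natAbs ≤ 2*d-2 →
      IsLocalRing.residue ↥O ⟨((k:ℤ) : AlgebraicClosure K), hmem k⟩ ≠ 0 := by
    intro k hk0 hk hzero
    have hkK : ((k:ℤ) : K) ≠ 0 := Int.cast_ne_zero.2 hk0
    have hinvval : v.valuation K (((k:ℤ) : K)⁻¹) ≤ 1 := by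
      rw [map_inv₀, val_int_eq_one hfact v hv k hk0 hk, inv_one]
    have hinvmem : algebraMap K (AlgebraicClosure K) (((k:ℤ) : K)⁻¹) ∈ O :=
      (hO _).2 hinvval
    have hunit : IsUnit (⟨((k:ℤ) : AlgebraicClosure K), hmem k⟩ : O) := by
      apply IsUnit.of_mul_eq_one ⟨_, hinvmem⟩
      apply Subtype.ext
      show ((k:ℤ) : AlgebraicClosure K) * algebraMap K (AlgebraicClosure K) (((k:ℤ) : K)⁻¹) = 1
      rw [← map_intCast (algebraMap K (AlgebraicClosure K)) k, ← map_mul,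
        mul_inv_cancel₀ hkK, map_one]
    have hmax : (⟨((k:ℤ) : AlgebraicClosure K), hmem k⟩ : O) ∈ IsLocalRing.maximalIdeal ↥O :=
      (Ideal.Quotient.eq_zero_iff_mem).1 hzero
    exact (IsLocalRing.mem_maximalIdeal _).1 hmax hunit
  intro P hP Q hQ hred
  have hredsome : ∀ n : ℤ, ProjLine.red O (some ((n:ℤ) : AlgebraicClosure K))
      = some (IsLocalRing.residue ↥O ⟨((n:ℤ) : AlgebraicClosure K), hmem n⟩) := fun n =>
    dif_pos (hmem n)
  rcases hP with rfl | ⟨m, hm, rfl⟩ <;> rcases hQ with rfl | ⟨n, hn, rfl⟩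
  · rfl
  · rw [hredsome n] at hred; simp [ProjLine.red] at hred
  · rw [hredsome m] at hred; simp [ProjLine.red] at hred
  · rw [hredsome m, hredsome n] at hred
    have heq : m = n := by
      by_contra hne
      have hk0 : m - n ≠ 0 := sub_ne_zero.2 hne
      rw [Set.mem_Icc] at hm hn
      have hkabs : (m - n).natAbs ≤ 2*d-2 := by omega
      apply hres (m - n) hk0 hkabs
      have hsub : (⟨(((m - n):ℤ) : AlgebraicClosure K), hmem (m-n)⟩ : O)
          = ⟨((m:ℤ) : AlgebraicClosure K), hmem m⟩ - ⟨((n:ℤ) : AlgebraicClosure K), hmem n⟩ := by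
        apply Subtype.ext
        show (((m - n):ℤ) : AlgebraicClosure K) = ((m:ℤ) : AlgebraicClosure K) - ((n:ℤ) : AlgebraicClosure K)
        push_cast; ring
      rw [hsub, map_sub, Option.some.inj hred, sub_self]
    rw [heq]

lemma prodNum_eq_map : (∏ i ∈ Finset.range d, (X - C ((i:ℕ):K)))
    = (∏ i ∈ Finset.range d, (X - C ((i:ℕ):ℤ))).map (Int.castRingHom K) := by
  rw [Polynomial.map_prod]
  apply Finset.prod_congr rfl
  intro i _
  simp

lemma fDen_eq_map : fDen K d
    = (∏ i ∈ Finset.range (d-1), (X + C ((i+1:ℕ):ℤ))).map (Int.castRingHom K) := by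
  rw [Polynomial.map_prod]
  apply Finset.prod_congr rfl
  intro i _
  simp

lemma sInteger_fNum_coeff {d : ℕ} {a : K} (S : Set (NFPlace K)) (ha : SUnit S a) (n : ℕ) :
    SInteger S ((fNum K d a).coeff n) := by
  intro v hv
  rw [fNum, coeff_C_mul, prodNum_eq_map, coeff_map, Valuation.map_mul]
  rw [ha.2 v hv, one_mul]
  exact val_int_le_one v _

lemma sInteger_fDen_coeff {d : ℕ} (S : Set (NFPlace K)) (n : ℕ) :
    SInteger S ((fDen K d).coeff n) := by
  intro v hv
  rw [fDen_eq_map, coeff_map]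
  exact val_int_le_one v _

lemma polyBar_fNum {d : ℕ} {a : K} : polyBar (fNum K d a)
    = fNum (AlgebraicClosure K) d (algebraMap K (AlgebraicClosure K) a) := by
  unfold polyBar fNum
  rw [Polynomial.map_mul, Polynomial.map_prod, map_C]
  congr 1
  apply Finset.prod_congr rfl
  intro i _
  rw [Polynomial.map_sub, map_X, map_C, map_natCast]

lemma polyBar_fDen {d : ℕ} : polyBar (fDen K d) = fDen (AlgebraicClosure K) d := by
  unfold polyBar fDen
  rw [Polynomial.map_prod]
  apply Finset.prod_congr rfl
  intro i _
  rw [Polynomial.map_add, map_X, map_C, map_natCast]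


end NF

section DetTools
open Matrix
variable {R : Type*} [CommRing R]

/-- The equivalence `Fin n₁ ⊕ Fin n₂ ≃ Fin N` given `n₁ + n₂ = N`. -/
def emb {n₁ n₂ N : ℕ} (h : n₁ + n₂ = N) : Fin n₁ ⊕ Fin n₂ ≃ Fin N :=
  finSumFinEquiv.trans (finCongr h)

lemma emb_inl {n₁ n₂ N : ℕ} (h : n₁ + n₂ = N) (i : Fin n₁) :
    ((emb h (Sum.inl i) : Fin N) : ℕ) = (i : ℕ) := by
  simp [emb]

lemma emb_inr {n₁ n₂ N : ℕ} (h : n₁ + n₂ = N) (i : Fin n₂) :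
    ((emb h (Sum.inr i) : Fin N) : ℕ) = n₁ + (i : ℕ) := by
  simp [emb]

lemma det_block_split {n₁ n₂ N : ℕ} (h : n₁ + n₂ = N) (M : Matrix (Fin N) (Fin N) R)
    (hz : ∀ (i : Fin n₂) (j : Fin n₁), M (emb h (Sum.inr i)) (emb h (Sum.inl j)) = 0) :
    M.det = (Matrix.of fun i j : Fin n₁ => M (emb h (Sum.inl i)) (emb h (Sum.inl j))).det *
            (Matrix.of fun i j : Fin n₂ => M (emb h (Sum.inr i)) (emb h (Sum.inr j))).det := by
  have hM : M.det = (M.submatrix (emb h) (emb h)).det :=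
    (Matrix.det_submatrix_equiv_self _ _).symm
  rw [hM, ← Matrix.fromBlocks_toBlocks (M.submatrix (emb h) (emb h))]
  have hz' : (M.submatrix (emb h) (emb h)).toBlocks₂₁ = 0 := by
    ext i j
    exact hz i j
  rw [hz', Matrix.det_fromBlocks_zero₂₁]
  rfl

lemma det_revandermonde {n : ℕ} (w : Fin n → R) :
    ∃ ε : ℤˣ, (Matrix.of fun i j : Fin n => w j ^ (n - 1 - (i : ℕ))).det
      = (ε : ℤ) * ∏ i : Fin n, ∏ j ∈ Finset.Ioi i, (w j - w i) := by
  refine ⟨Equiv.Perm.sign (Fin.revPerm : Equiv.Perm (Fin n)), ?_⟩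
  have h1 : (Matrix.of fun i j : Fin n => w j ^ (n - 1 - (i : ℕ)))
      = ((Matrix.vandermonde w).submatrix id ⇑(Fin.revPerm : Equiv.Perm (Fin n)))ᵀ := by
    ext i j
    show w j ^ (n - 1 - (i : ℕ)) = (Matrix.vandermonde w).submatrix id
      ⇑(Fin.revPerm : Equiv.Perm (Fin n)) j i
    rw [Matrix.submatrix_apply, Matrix.vandermonde_apply]
    congr 1
    show n - 1 - (i : ℕ) = ((Fin.rev i : Fin n) : ℕ)
    rw [Fin.val_rev]
    omega
  rw [h1, Matrix.det_transpose, Matrix.det_permute', Matrix.det_vandermonde]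

lemma det_revandermonde' {n : ℕ} (w : Fin n → R) :
    ∃ ε : ℤˣ, (Matrix.of fun i j : Fin n => w i ^ (n - 1 - (j : ℕ))).det
      = (ε : ℤ) * ∏ i : Fin n, ∏ j ∈ Finset.Ioi i, (w j - w i) := by
  obtain ⟨ε, hε⟩ := det_revandermonde w
  refine ⟨ε, ?_⟩
  have h : (Matrix.of fun i j : Fin n => w i ^ (n - 1 - (j:ℕ)))
      = (Matrix.of fun i j : Fin n => w j ^ (n - 1 - (i:ℕ)))ᵀ := by
    ext i j
    rfl
  rw [h, Matrix.det_transpose, hε]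

lemma det_scaled_cols {n : ℕ} (V : Matrix (Fin n) (Fin n) R) (g : Fin n → R) :
    (Matrix.of fun i j : Fin n => V i j * g j).det = V.det * ∏ j, g j := by
  have h : (Matrix.of fun i j : Fin n => V i j * g j) = V * Matrix.diagonal g := by
    ext i j
    rw [Matrix.mul_diagonal]
    rfl
  rw [h, Matrix.det_mul, Matrix.det_diagonal]

end DetTools

section Syl
open Matrix

def ptsInt (d s : ℕ) : ℤ := if s < d then -(s:ℤ) else (s:ℤ) - d

lemma ptsInt_lt (d s : ℕ) (h : s < d) : ptsInt d s = -(s:ℤ) := if_pos h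
lemma ptsInt_ge (d s : ℕ) (h : ¬ s < d) : ptsInt d s = (s:ℤ) - d := if_neg h

lemma ptsInt_diff (d i j : ℕ) (h1 : 1 ≤ i) (hij : i < j) (hj : j ≤ d+d-1) :
    ptsInt d j - ptsInt d i ≠ 0 ∧ (ptsInt d j - ptsInt d i).natAbs ≤ 2*d-2 := by
  unfold ptsInt
  split_ifs <;> constructor <;> omega

def Emat (F : Type*) [Field F] (d : ℕ) : Matrix (Fin (d+d)) (Fin (d+d)) F :=
  Matrix.of fun s j => if (s:ℕ) = 0 then (if (j:ℕ) = 0 then 1 else 0)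
    else ((ptsInt d (s:ℕ) : ℤ) : F)^(d+d-1-(j:ℕ))

variable {F : Type*} [Field F]

lemma row_conv (f : F[X]) (D N r : ℕ) (hf : f.natDegree ≤ D) (hr : r + D < N) (c : F) :
    ∑ j ∈ Finset.range N, (if r ≤ j ∧ j ≤ r + D then f.coeff (D + r - j) else 0) * c^(N - 1 - j)
      = c^(N - 1 - D - r) * f.eval c := by
  have hsub : Finset.Icc r (r+D) ⊆ Finset.range N := by
    intro j hj
    rw [Finset.mem_Icc] at hj
    exact Finset.mem_range.2 (by omega)
  have h1 : ∑ j ∈ Finset.range N,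
        (if r ≤ j ∧ j ≤ r + D then f.coeff (D + r - j) else 0) * c^(N - 1 - j)
      = ∑ j ∈ Finset.Icc r (r+D), f.coeff (D + r - j) * c^(N - 1 - j) := by
    rw [← Finset.sum_subset hsub (fun j _ hnot => by
      rw [Finset.mem_Icc] at hnot
      rw [if_neg hnot, zero_mul])]
    apply Finset.sum_congr rfl
    intro j hj
    rw [Finset.mem_Icc] at hj
    rw [if_pos hj]
  rw [h1, ← Finset.Ico_add_one_right_eq_Icc, Finset.sum_Ico_eq_sum_range]
  have h2 : r + D + 1 - r = D + 1 := by omega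
  rw [h2]
  have h3 : ∀ k ∈ Finset.range (D+1),
      f.coeff (D + r - (r + k)) * c^(N - 1 - (r + k))
        = f.coeff (D - k) * c^((N - 1 - D - r) + (D - k)) := by
    intro k hk
    rw [Finset.mem_range] at hk
    have e1 : D + r - (r + k) = D - k := by omega
    have e2 : N - 1 - (r + k) = (N - 1 - D - r) + (D - k) := by omega
    rw [e1, e2]
  rw [Finset.sum_congr rfl h3]
  have h4 := Finset.sum_range_reflect (fun k => f.coeff k * c^((N - 1 - D - r) + k)) (D+1)
  simp only [Nat.add_sub_cancel] at h4
  rw [h4]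
  rw [eval_eq_sum_range' (lt_of_le_of_lt hf (Nat.lt_succ_self D)), Finset.mul_sum]
  apply Finset.sum_congr rfl
  intro k _
  rw [pow_add]
  ring

lemma mulE_apply0 (d : ℕ) (hd : 1 ≤ d) (p q : F[X])
    (r s : Fin (d+d)) (hs : (s:ℕ) = 0) :
    (ProjLine.sylvester d d p q * (Emat F d)ᵀ) r s =
      if (r:ℕ) = 0 then p.coeff d else (if (r:ℕ) = d then q.coeff d else 0) := by
  rw [Matrix.mul_apply]
  have hstep : ∀ j : Fin (d+d), ProjLine.sylvester d d p q r j * (Emat F d)ᵀ j s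
      = if j = (⟨0, by omega⟩ : Fin (d+d)) then ProjLine.sylvester d d p q r j else 0 := by
    intro j
    have hE : (Emat F d)ᵀ j s = if (j:ℕ) = 0 then 1 else 0 := by
      show Emat F d s j = _
      unfold Emat
      rw [Matrix.of_apply, if_pos hs]
    rw [hE]
    by_cases hj : (j:ℕ) = 0
    · rw [if_pos hj, mul_one, if_pos (Fin.ext hj)]
    · rw [if_neg hj, mul_zero, if_neg (fun h => hj (by rw [h]))]
  rw [Finset.sum_congr rfl (fun j _ => hstep j), Finset.sum_ite_eq' Finset.univ]
  rw [if_pos (Finset.mem_univ _)]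
  show (if (r:ℕ) < d then (if (r:ℕ) ≤ 0 ∧ 0 ≤ (r:ℕ) + d then p.coeff (d + (r:ℕ) - 0) else 0)
      else (if (r:ℕ) - d ≤ 0 ∧ 0 ≤ ((r:ℕ) - d) + d then q.coeff (d + ((r:ℕ) - d) - 0) else 0)) = _
  by_cases hr : (r:ℕ) < d
  · rw [if_pos hr]
    by_cases hr0 : (r:ℕ) = 0
    · rw [if_pos (by omega), if_pos hr0]
      congr 1
      omega
    · rw [if_neg (by omega), if_neg hr0, if_neg (by omega)]
  · rw [if_neg hr]
    by_cases hrd : (r:ℕ) = d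
    · rw [if_pos (by omega), if_neg (by omega), if_pos hrd]
      congr 1
      omega
    · rw [if_neg (by omega), if_neg (by omega), if_neg hrd]

lemma mulE_apply (d : ℕ) (hd : 1 ≤ d) (p q : F[X]) (hp : p.natDegree ≤ d) (hq : q.natDegree ≤ d)
    (r s : Fin (d+d)) (hs : (s:ℕ) ≠ 0) :
    (ProjLine.sylvester d d p q * (Emat F d)ᵀ) r s =
      if (r:ℕ) < d then
        ((ptsInt d (s:ℕ) : ℤ) : F)^(d-1-(r:ℕ)) * p.eval ((ptsInt d (s:ℕ) : ℤ) : F)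
      else ((ptsInt d (s:ℕ) : ℤ) : F)^(d+d-1-(r:ℕ)) * q.eval ((ptsInt d (s:ℕ) : ℤ) : F) := by
  set c : F := ((ptsInt d (s:ℕ) : ℤ) : F) with hc
  rw [Matrix.mul_apply]
  have hE : ∀ j : Fin (d+d), (Emat F d)ᵀ j s = c^(d+d-1-(j:ℕ)) := by
    intro j
    show Emat F d s j = _
    unfold Emat
    rw [Matrix.of_apply, if_neg hs]
  by_cases hr : (r:ℕ) < d
  · rw [if_pos hr]
    have hstep : ∀ j : Fin (d+d), ProjLine.sylvester d d p q r j * (Emat F d)ᵀ j s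
        = (fun jn => (if (r:ℕ) ≤ jn ∧ jn ≤ (r:ℕ) + d then p.coeff (d + (r:ℕ) - jn) else 0)
            * c^(d+d-1-jn)) (j:ℕ) := by
      intro j
      rw [hE j]
      show (if (r:ℕ) < d then _ else _) * _ = _
      rw [if_pos hr]
    rw [Finset.sum_congr rfl (fun j _ => hstep j),
      Fin.sum_univ_eq_sum_range (fun jn => (if (r:ℕ) ≤ jn ∧ jn ≤ (r:ℕ) + d
        then p.coeff (d + (r:ℕ) - jn) else 0) * c ^ (d+d-1-jn)) (d+d)]
    rw [row_conv p d (d+d) (r:ℕ) hp (by omega) c]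
    congr 2
    omega
  · rw [if_neg hr]
    have hstep : ∀ j : Fin (d+d), ProjLine.sylvester d d p q r j * (Emat F d)ᵀ j s
        = (fun jn => (if (r:ℕ) - d ≤ jn ∧ jn ≤ ((r:ℕ) - d) + d then q.coeff (d + ((r:ℕ) - d) - jn) else 0)
            * c^(d+d-1-jn)) (j:ℕ) := by
      intro j
      rw [hE j]
      show (if (r:ℕ) < d then _ else _) * _ = _
      rw [if_neg hr]
    rw [Finset.sum_congr rfl (fun j _ => hstep j),
      Fin.sum_univ_eq_sum_range (fun jn => (if (r:ℕ) - d ≤ jn ∧ jn ≤ ((r:ℕ) - d) + d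
        then q.coeff (d + ((r:ℕ) - d) - jn) else 0) * c ^ (d+d-1-jn)) (d+d)]
    rw [row_conv q d (d+d) ((r:ℕ) - d) hq (by omega) c]
    congr 2
    omega

lemma det_block_split₁₂ {R : Type*} [CommRing R] {n₁ n₂ N : ℕ} (h : n₁ + n₂ = N)
    (M : Matrix (Fin N) (Fin N) R)
    (hz : ∀ (i : Fin n₁) (j : Fin n₂), M (emb h (Sum.inl i)) (emb h (Sum.inr j)) = 0) :
    M.det = (Matrix.of fun i j : Fin n₁ => M (emb h (Sum.inl i)) (emb h (Sum.inl j))).det *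
            (Matrix.of fun i j : Fin n₂ => M (emb h (Sum.inr i)) (emb h (Sum.inr j))).det := by
  have hM : M.det = (M.submatrix (emb h) (emb h)).det :=
    (Matrix.det_submatrix_equiv_self _ _).symm
  rw [hM, ← Matrix.fromBlocks_toBlocks (M.submatrix (emb h) (emb h))]
  have hz' : (M.submatrix (emb h) (emb h)).toBlocks₁₂ = 0 := by
    ext i j
    exact hz i j
  rw [hz', Matrix.det_fromBlocks_zero₁₂]
  rfl

lemma det_Emat {F : Type*} [Field F] (d : ℕ) (hd : 2 ≤ d) :
    ∃ ε : ℤˣ, (Emat F d).det = (ε:ℤ) *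
      ∏ i : Fin (d+d-1), ∏ j ∈ Finset.Ioi i,
        (((ptsInt d (1+(j:ℕ)) : ℤ) : F) - ((ptsInt d (1+(i:ℕ)) : ℤ) : F)) := by
  have h2 : 1 + (d+d-1) = d+d := by omega
  have hsplit := det_block_split₁₂ h2 (Emat F d) (fun i j => by
    show Emat F d _ _ = 0
    unfold Emat
    rw [Matrix.of_apply, if_pos (by rw [emb_inl]; have := i.isLt; omega),
      if_neg (by rw [emb_inr]; omega)])
  rw [hsplit]
  have h11 : (Matrix.of fun i j : Fin 1 =>
      Emat F d (emb h2 (Sum.inl i)) (emb h2 (Sum.inl j))).det = 1 := by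
    rw [Matrix.det_fin_one, Matrix.of_apply]
    show Emat F d _ _ = 1
    unfold Emat
    rw [Matrix.of_apply, if_pos (by rw [emb_inl]; rfl), if_pos (by rw [emb_inl]; rfl)]
  rw [h11, one_mul]
  set t : Fin (d+d-1) → F := fun i => ((ptsInt d (1+(i:ℕ)) : ℤ) : F) with ht
  obtain ⟨ε, hε⟩ := det_revandermonde' (R := F) t
  refine ⟨ε, ?_⟩
  rw [← hε]
  congr 1
  ext i j
  show Emat F d _ _ = _
  unfold Emat
  rw [Matrix.of_apply, if_neg (by rw [emb_inr]; omega)]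
  rw [emb_inr, emb_inr, Matrix.of_apply]
  have he : d + d - 1 - (1 + (j:ℕ)) = d + d - 1 - 1 - (j:ℕ) := by omega
  rw [he]

lemma det_sylvester_mulE {F : Type*} [Field F] [CharZero F] (d : ℕ) (hd : 2 ≤ d)
    (a : F) (ha : a ≠ 0) :
    ∃ ε : ℤˣ,
      (ProjLine.sylvester d d (fNum F d a) (fDen F d) * (Emat F d)ᵀ).det
        = (ε:ℤ) * (a
          * (∏ j : Fin (d-1), (fNum F d a).eval ((ptsInt d (1+(j:ℕ)) : ℤ) : F))
          * (∏ i : Fin (d-1), ∏ j ∈ Finset.Ioi i,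
              (((ptsInt d (1+(j:ℕ)) : ℤ) : F) - ((ptsInt d (1+(i:ℕ)) : ℤ) : F)))
          * (∏ j : Fin d, (fDen F d).eval ((ptsInt d (d+(j:ℕ)) : ℤ) : F))
          * (∏ i : Fin d, ∏ j ∈ Finset.Ioi i,
              (((ptsInt d (d+(j:ℕ)) : ℤ) : F) - ((ptsInt d (d+(i:ℕ)) : ℤ) : F)))) := by
  have hp : (fNum F d a).natDegree ≤ d := le_of_eq (fNum_natDegree ha)
  have hq : (fDen F d).natDegree ≤ d := by rw [fDen_natDegree]; omega
  set p : F[X] := fNum F d a with hpdef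
  set q : F[X] := fDen F d with hqdef
  set T := ProjLine.sylvester d d p q * (Emat F d)ᵀ with hTdef
  have hdd : d + d = d + d := rfl
  have hz : ∀ (i : Fin d) (j : Fin d), T (emb hdd (Sum.inr i)) (emb hdd (Sum.inl j)) = 0 := by
    intro i j
    by_cases hj : ((emb hdd (Sum.inl j) : Fin (d+d)) : ℕ) = 0
    · rw [hTdef, mulE_apply0 d (by omega) p q _ _ hj, if_neg (by rw [emb_inr]; omega)]
      by_cases hi : (i:ℕ) = 0
      · rw [if_pos (by rw [emb_inr]; omega), hqdef]
        exact fDen_coeff_d (by omega)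
      · rw [if_neg (by rw [emb_inr]; omega)]
    · rw [hTdef, mulE_apply d (by omega) p q hp hq _ _ hj, if_neg (by rw [emb_inr]; omega)]
      rw [emb_inl] at hj ⊢
      have hptj : ptsInt d (j:ℕ) = -((j:ℕ):ℤ) := ptsInt_lt d _ j.isLt
      rw [hptj, hqdef, fDen_eval_int_neg (-((j:ℕ):ℤ)) (by omega) (by have := j.isLt; omega),
        mul_zero]
  have hsplit := det_block_split hdd T hz
  -- the C block
  set u : Fin d → F := fun j => ((ptsInt d (d+(j:ℕ)) : ℤ) : F) with hu
  set V : Matrix (Fin d) (Fin d) F := Matrix.of fun i j => u j ^ (d - 1 - (i:ℕ)) with hV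
  have hCeq : (Matrix.of fun i j : Fin d => T (emb hdd (Sum.inr i)) (emb hdd (Sum.inr j)))
      = (Matrix.of fun i j : Fin d => V i j * (q.eval (u j))) := by
    ext i j
    show T _ _ = _
    rw [hTdef, mulE_apply d (by omega) p q hp hq _ _ (by rw [emb_inr]; omega),
      if_neg (by rw [emb_inr]; omega), emb_inr, emb_inr]
    have he : d + d - 1 - (d + (i:ℕ)) = d - 1 - (i:ℕ) := by omega
    rw [he]
    rfl
  obtain ⟨ε₂, hε₂⟩ := det_revandermonde (R := F) u
  rw [← hV] at hε₂
  -- the A block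
  have h1d : 1 + (d-1) = d := by omega
  set A : Matrix (Fin d) (Fin d) F :=
    Matrix.of fun i j => T (emb hdd (Sum.inl i)) (emb hdd (Sum.inl j)) with hA
  have hzA : ∀ (i : Fin (d-1)) (j : Fin 1), A (emb h1d (Sum.inr i)) (emb h1d (Sum.inl j)) = 0 := by
    intro i j
    show T _ _ = 0
    rw [hTdef, mulE_apply0 d (by omega) p q _ _
      (by rw [emb_inl, emb_inl]; have := j.isLt; omega)]
    rw [if_neg (by rw [emb_inl, emb_inr]; omega),
      if_neg (by rw [emb_inl, emb_inr]; have := i.isLt; omega)]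
  have hsplitA := det_block_split h1d A hzA
  have hA11 : (Matrix.of fun i j : Fin 1 =>
      A (emb h1d (Sum.inl i)) (emb h1d (Sum.inl j))).det = a := by
    rw [Matrix.det_fin_one, Matrix.of_apply]
    show T _ _ = a
    rw [hTdef, mulE_apply0 d (by omega) p q _ _
      (by rw [emb_inl, emb_inl]; have := (0 : Fin 1).isLt; omega)]
    rw [if_pos (by rw [emb_inl, emb_inl]; have := (0 : Fin 1).isLt; omega), hpdef]
    exact fNum_coeff_d ha
  set w : Fin (d-1) → F := fun j => ((ptsInt d (1+(j:ℕ)) : ℤ) : F) with hw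
  set V2 : Matrix (Fin (d-1)) (Fin (d-1)) F :=
    Matrix.of fun i j => w j ^ (d - 1 - 1 - (i:ℕ)) with hV2
  have hAeq : (Matrix.of fun i j : Fin (d-1) => A (emb h1d (Sum.inr i)) (emb h1d (Sum.inr j)))
      = (Matrix.of fun i j : Fin (d-1) => V2 i j * (p.eval (w j))) := by
    ext i j
    show T _ _ = _
    rw [hTdef, mulE_apply d (by omega) p q hp hq _ _
      (by rw [emb_inl, emb_inr]; omega)]
    rw [if_pos (by rw [emb_inl, emb_inr]; have := i.isLt; omega)]
    rw [emb_inl, emb_inl, emb_inr, emb_inr]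
    have he : d - 1 - (1 + (i:ℕ)) = d - 1 - 1 - (i:ℕ) := by omega
    rw [he]
    rfl
  obtain ⟨ε₁, hε₁⟩ := det_revandermonde (R := F) w
  rw [← hV2] at hε₁
  refine ⟨ε₁ * ε₂, ?_⟩
  rw [hsplit, hsplitA, hA11, hAeq, hCeq, det_scaled_cols, det_scaled_cols, hε₁, hε₂]
  push_cast
  ring

end Syl

section Final
open Matrix
variable {K : Type*} [Field K] [NumberField K] {S : Set (NFPlace K)}

lemma SUnit.mul' {x y : K} (hx : SUnit S x) (hy : SUnit S y) : SUnit S (x*y) :=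
  ⟨mul_ne_zero hx.1 hy.1, fun v hv => by rw [_root_.map_mul, hx.2 v hv, hy.2 v hv, one_mul]⟩

lemma sUnit_prod {ι : Type*} (s : Finset ι) (f : ι → K) (h : ∀ i ∈ s, SUnit S (f i)) :
    SUnit S (∏ i ∈ s, f i) := by
  constructor
  · exact Finset.prod_ne_zero_iff.2 fun i hi => (h i hi).1
  · intro v hv
    rw [_root_.map_prod, Finset.prod_congr rfl (fun i hi => (h i hi).2 v hv)]
    exact Finset.prod_const_one

lemma sUnit_unit (ε : ℤˣ) : SUnit S (((ε : ℤ) : K)) := by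
  rcases Int.units_eq_one_or ε with h | h <;> rw [h]
  · exact ⟨by norm_num, fun v hv => by norm_num⟩
  · refine ⟨by norm_num, fun v hv => ?_⟩
    have : (((-1 : ℤˣ) : ℤ) : K) = -(1 : K) := by norm_num
    rw [this, Valuation.map_neg, _root_.map_one]

lemma sUnit_smallInt {d : ℕ}
    (hfact : ∀ v : NFPlace K, v ∉ S → v.valuation K (((2*d-2).factorial : ℕ) : K) = 1)
    (k : ℤ) (hk0 : k ≠ 0) (habs : k.natAbs ≤ 2*d-2) : SUnit S ((k:ℤ):K) :=
  ⟨Int.cast_ne_zero.2 hk0, fun v hv => val_int_eq_one hfact v hv k hk0 habs⟩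

lemma sUnit_of_mul_cancel {x y : K} (hxy : SUnit S (x*y)) (hy : SUnit S y) : SUnit S x := by
  have hx0 : x ≠ 0 := fun h => hxy.1 (by rw [h, zero_mul])
  refine ⟨hx0, fun v hv => ?_⟩
  have h := hxy.2 v hv
  rw [_root_.map_mul, hy.2 v hv, mul_one] at h
  exact h

lemma sUnit_ptsInt_diff {d : ℕ} (hd : 2 ≤ d)
    (hfact : ∀ v : NFPlace K, v ∉ S → v.valuation K (((2*d-2).factorial : ℕ) : K) = 1)
    (x y : ℕ) (h1 : 1 ≤ x) (hxy : x < y) (hy : y ≤ d+d-1) :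
    SUnit S (((ptsInt d y : ℤ):K) - ((ptsInt d x : ℤ):K)) := by
  have h := ptsInt_diff d x y h1 hxy hy
  have he : ((ptsInt d y : ℤ):K) - ((ptsInt d x : ℤ):K)
      = ((ptsInt d y - ptsInt d x : ℤ) : K) := by push_cast; ring
  rw [he]
  exact sUnit_smallInt hfact _ h.1 h.2

lemma sUnit_resultant {d : ℕ} {a : K} (hd : 2 ≤ d) (S : Set (NFPlace K)) (ha : SUnit S a)
    (hfact : ∀ v : NFPlace K, v ∉ S → v.valuation K (((2*d-2).factorial : ℕ) : K) = 1) :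
    SUnit S (ProjLine.resultant d d (fNum K d a) (fDen K d)) := by
  have ha0 : a ≠ 0 := ha.1
  obtain ⟨ε, hdet⟩ := det_sylvester_mulE (F := K) d hd a ha0
  obtain ⟨ε₃, hE⟩ := det_Emat (F := K) d hd
  -- S-unit parts
  have hP1 : SUnit S (∏ j : Fin (d-1), (fNum K d a).eval ((ptsInt d (1+(j:ℕ)) : ℤ) : K)) := by
    apply sUnit_prod
    intro j _
    rw [fNum_eval]
    apply SUnit.mul' ha
    apply sUnit_prod
    intro i hi
    rw [Finset.mem_range] at hi
    have he : ((ptsInt d (1+(j:ℕ)) : ℤ) : K) - ((i:ℕ):K)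
        = ((ptsInt d (1+(j:ℕ)) - i : ℤ) : K) := by push_cast; ring
    rw [he]
    have hj := j.isLt
    have hz : ptsInt d (1+(j:ℕ)) = -((1+(j:ℕ) : ℕ):ℤ) := by
      rw [ptsInt_lt d _ (by omega)]
      try push_cast
      try ring
    apply sUnit_smallInt hfact
    · rw [hz]; push_cast; omega
    · rw [hz]; push_cast; omega
  have hP2 : SUnit S (∏ j : Fin d, (fDen K d).eval ((ptsInt d (d+(j:ℕ)) : ℤ) : K)) := by
    apply sUnit_prod
    intro j _
    rw [fDen_eval]
    apply sUnit_prod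
    intro i hi
    rw [Finset.mem_range] at hi
    have he : ((ptsInt d (d+(j:ℕ)) : ℤ) : K) + ((i+1:ℕ):K)
        = ((ptsInt d (d+(j:ℕ)) + (i+1) : ℤ) : K) := by push_cast; ring
    rw [he]
    have hj := j.isLt
    have hz : ptsInt d (d+(j:ℕ)) = ((j:ℕ):ℤ) := by
      rw [ptsInt_ge d _ (by omega)]
      try push_cast
      try ring
    apply sUnit_smallInt hfact
    · rw [hz]; push_cast; omega
    · rw [hz]; push_cast; omega
  have hV1 : SUnit S (∏ i : Fin (d-1), ∏ j ∈ Finset.Ioi i,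
      (((ptsInt d (1+(j:ℕ)) : ℤ) : K) - ((ptsInt d (1+(i:ℕ)) : ℤ) : K))) := by
    apply sUnit_prod
    intro i _
    apply sUnit_prod
    intro j hj
    rw [Finset.mem_Ioi] at hj
    have hij : (i:ℕ) < (j:ℕ) := hj
    have hjlt := j.isLt
    exact sUnit_ptsInt_diff hd hfact (1+(i:ℕ)) (1+(j:ℕ)) (by omega) (by omega) (by omega)
  have hV2 : SUnit S (∏ i : Fin d, ∏ j ∈ Finset.Ioi i,
      (((ptsInt d (d+(j:ℕ)) : ℤ) : K) - ((ptsInt d (d+(i:ℕ)) : ℤ) : K))) := by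
    apply sUnit_prod
    intro i _
    apply sUnit_prod
    intro j hj
    rw [Finset.mem_Ioi] at hj
    have hij : (i:ℕ) < (j:ℕ) := hj
    have hjlt := j.isLt
    exact sUnit_ptsInt_diff hd hfact (d+(i:ℕ)) (d+(j:ℕ)) (by omega) (by omega) (by omega)
  have hVE : SUnit S (∏ i : Fin (d+d-1), ∏ j ∈ Finset.Ioi i,
      (((ptsInt d (1+(j:ℕ)) : ℤ) : K) - ((ptsInt d (1+(i:ℕ)) : ℤ) : K))) := by
    apply sUnit_prod
    intro i _
    apply sUnit_prod
    intro j hj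
    rw [Finset.mem_Ioi] at hj
    have hij : (i:ℕ) < (j:ℕ) := hj
    have hjlt := j.isLt
    exact sUnit_ptsInt_diff hd hfact (1+(i:ℕ)) (1+(j:ℕ)) (by omega) (by omega) (by omega)
  have hEunit : SUnit S (Emat K d).det := by
    rw [hE]
    exact SUnit.mul' (sUnit_unit ε₃) hVE
  have hTunit : SUnit S (ProjLine.sylvester d d (fNum K d a) (fDen K d) * (Emat K d)ᵀ).det := by
    rw [hdet]
    exact SUnit.mul' (sUnit_unit ε)
      (SUnit.mul' (SUnit.mul' (SUnit.mul' (SUnit.mul' ha hP1) hV1) hP2) hV2)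
  have hmul : (ProjLine.resultant d d (fNum K d a) (fDen K d)) * (Emat K d).det
      = (ProjLine.sylvester d d (fNum K d a) (fDen K d) * (Emat K d)ᵀ).det := by
    rw [Matrix.det_mul, Matrix.det_transpose]
    rfl
  exact sUnit_of_mul_cancel (by rw [hmul]; exact hTunit) hEunit

end Final

end Aux

/-- **Proposition 4.1(a).**  Let `d ≥ 2` and let `S` be the set of primes of `K`
dividing `(2d-2)!`.  For every `S`-unit `a`, the triple `(f_a, X, X)` with
`f_a(x) = a·x(x-1)⋯(x-d+1)/((x+1)⋯(x+d-1))` and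
`X = {0,1,…,d-1} ∪ {-1,…,-(d-1)} ∪ {∞}` belongs to `GR¹_d[2d](K,S)`;
moreover `f_a(X) = {0, ∞}`. -/
theorem fa_triple_in_GR
    (K : Type*) [Field K] [NumberField K]
    (d : ℕ) (hd : 2 ≤ d)
    (S : Set (NFPlace K))
    (hS : S = {v : NFPlace K | v.valuation K ((Nat.factorial (2 * d - 2) : K)) ≠ 1})
    (a : K) (ha : SUnit S a) :
    MemGR S d (2 * d)
      ⟨fNum K d a, fDen K d,
        stdSet (AlgebraicClosure K) d, stdSet (AlgebraicClosure K) d⟩ ∧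
    ProjLine.eval d (polyBar (fNum K d a)) (polyBar (fDen K d)) '' stdSet (AlgebraicClosure K) d
      = {some (0 : AlgebraicClosure K), none} := by
  haveI : CharZero (AlgebraicClosure K) :=
    charZero_of_injective_algebraMap (algebraMap K (AlgebraicClosure K)).injective
  have ha0 : a ≠ 0 := ha.1
  have hab : algebraMap K (AlgebraicClosure K) a ≠ 0 := fun h => ha0 (by
    exact (_root_.map_eq_zero _).1 h)
  have hfact : ∀ v : NFPlace K, v ∉ S → v.valuation K (((2*d-2).factorial : ℕ) : K) = 1 := by
    intro v hv
    rw [hS] at hv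
    simpa using hv
  have hpbar : polyBar (fNum K d a) = fNum (AlgebraicClosure K) d (algebraMap K _ a) :=
    polyBar_fNum
  have hqbar : polyBar (fDen K d) = fDen (AlgebraicClosure K) d := polyBar_fDen
  constructor
  · constructor
    · refine ⟨isRatMap_fa hd ha0, stdSet_finite, ?_, galInvariant_stdSet d, ?_,
        goodRedPoints_stdSet d hd S hfact⟩
      · show stdSet (AlgebraicClosure K) d = stdSet (AlgebraicClosure K) d ∪ _
        rw [hpbar, hqbar]
        exact (Set.union_eq_self_of_subset_right (image_eval_subset_stdSet hd hab)).symm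
      · show (∑ᶠ P ∈ stdSet (AlgebraicClosure K) d, _) = 2*d
        rw [hpbar, hqbar]
        exact sum_ram_stdSet hd hab
    · refine ⟨1, fNum K d a, fDen K d, by simp, isRatMap_fa hd ha0,
        sInteger_fNum_coeff S ha, sInteger_fDen_coeff S, ?_, ?_⟩
      · exact sUnit_resultant hd S ha hfact
      · intro P
        rw [mobius_one, mobius_one]
  · rw [hpbar, hqbar]
    exact image_eval_stdSet hd hab

end
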